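/- For every integer r ≥ 2, the following identity holds in ℋ: ⧈(a b^{r−1}) = Σ_{w ∈ W_r} c(w) · w, where W_r is the set of words of length r and the integers c(w) are: c(a^r) = r; c(a^{r−1}b) = r; and c(w) = j(w) for every other word w of length r, where j(w) is the number of letters a at the beginning of w (i.e. w = a^{j(w)} u with u not starting with a). -/

import Mathlib

inductive Letter | a | b
deriving DecidableEq

abbrev Word := List Letter

/-- The algebra `ℋ`: formal `ℚ`-linear combinations of words. -/
abbrev H := Word →₀ ℚ

/-- The list of shuffles of two words (with multiplicity). -/
def shuffleList : Word → Word → List Word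
  | [], v => [v]
  | u, [] => [u]
  | x :: u, y :: v =>
      ((shuffleList u (y :: v)).map fun t => x :: t) ++
      ((shuffleList (x :: u) v).map fun t => y :: t)
termination_by u v => u.length + v.length
decreasing_by all_goals simp

/-- The shuffle product `u * v` of two words, as an element of `ℋ`. -/
noncomputable def shW (u v : Word) : H :=
  ((shuffleList u v).map fun t => Finsupp.single t (1 : ℚ)).sum

/-- The shuffle product of a word with an element of `ℋ`, extended linearly. -/
noncomputable def shWH (u : Word) (g : H) : H := g.sum fun v cv => cv • shW u v

/-- Concatenation of a word with an element of `ℋ`, extended linearly. -/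
noncomputable def concatWH (u : Word) (g : H) : H :=
  g.sum fun v c => Finsupp.single (u ++ v) c

/-- The list of all words of length `m`. -/
def wordsOfLength : ℕ → List Word
  | 0 => [[]]
  | n + 1 =>
      ((wordsOfLength n).map fun t => Letter.a :: t) ++
      ((wordsOfLength n).map fun t => Letter.b :: t)

/-- `(a+b)^m`, the `m`-fold concatenation power of `a+b` expanded multilinearly:
the sum of all words of length `m`. -/
noncomputable def abPow (m : ℕ) : H :=
  ((wordsOfLength m).map fun t => Finsupp.single t (1 : ℚ)).sum

/-- `(b-a)^m`, the `m`-fold concatenation power of `b-a` expanded multilinearly: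
the signed sum of all words of length `m`. -/
noncomputable def bmaPow (m : ℕ) : H :=
  ((wordsOfLength m).map fun t =>
    Finsupp.single t ((-1 : ℚ) ^ t.count Letter.a)).sum

def sigmaL : Letter → Letter
  | .a => .b
  | .b => .a

/-- `σ(c₁⋯c_n) = σ(c_n)⋯σ(c₁)` with `σ(a)=b`, `σ(b)=a`. -/
def sigmaW (w : Word) : Word := (w.map sigmaL).reverse

/-- The operator `⧈` : `⧈(c₁⋯c_n) = Σ_{i=0}^{n} (c₁⋯c_i) * σ(c_{i+1}⋯c_n)`. -/
noncomputable def box (w : Word) : H :=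
  ∑ i ∈ Finset.range (w.length + 1), shW (w.take i) (sigmaW (w.drop i))

def isA : Letter → Bool
  | .a => true
  | .b => false

/-- `j(w)`: the number of letters `a` at the beginning of `w`. -/
def jW (w : Word) : ℕ := (w.takeWhile isA).length

/-- The coefficient `c(w)` for a word of length `r`. -/
def ccoef (r : ℕ) (w : Word) : ℕ :=
  if w = List.replicate r Letter.a then r
  else if w = List.replicate (r - 1) Letter.a ++ [Letter.b] then r
  else jW w

section Aux
section Aux

lemma mapDomain_cons_sum (x : Letter) (L : List Word) (c : Word → ℚ) :
    Finsupp.mapDomain (x :: ·) ((L.map fun t => Finsupp.single t (c t)).sum) =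
      (L.map fun t => Finsupp.single (x :: t) (c t)).sum := by
  induction L with
  | nil => simp
  | cons h t ih => simp [Finsupp.mapDomain_add, Finsupp.mapDomain_single, ih]

lemma shW_nil_left (v : Word) : shW [] v = Finsupp.single v 1 := by
  simp [shW, shuffleList]

lemma shW_nil_right (u : Word) : shW u [] = Finsupp.single u 1 := by
  cases u <;> simp [shW, shuffleList]

lemma shW_cons (x y : Letter) (u v : Word) :
    shW (x :: u) (y :: v) =
      Finsupp.mapDomain (x :: ·) (shW u (y :: v)) +
      Finsupp.mapDomain (y :: ·) (shW (x :: u) v) := by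
  rw [shW, shuffleList]
  simp only [List.map_append, List.map_map, List.sum_append, shW,
    mapDomain_cons_sum (c := fun _ => (1:ℚ))]
  rfl

noncomputable def Bsum (n : ℕ) : H :=
  ∑ k ∈ Finset.range (n + 1),
    shW (List.replicate k Letter.b) (List.replicate (n - k) Letter.a)

lemma abPow_succ (n : ℕ) :
    abPow (n + 1) =
      Finsupp.mapDomain (Letter.a :: ·) (abPow n) +
      Finsupp.mapDomain (Letter.b :: ·) (abPow n) := by
  rw [abPow, wordsOfLength]
  simp only [List.map_append, List.map_map, List.sum_append, abPow,
    mapDomain_cons_sum (c := fun _ => (1:ℚ))]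
  rfl

lemma Bsum_eq (n : ℕ) : Bsum n = abPow n := by
  induction n with
  | zero => simp [Bsum, abPow, wordsOfLength, shW_nil_left]
  | succ n ih =>
    rw [Bsum, Finset.sum_range_succ', Finset.sum_range_succ]
    have h1 : ∀ k ∈ Finset.range n,
        shW (List.replicate (k+1) Letter.b) (List.replicate (n + 1 - (k+1)) Letter.a) =
        Finsupp.mapDomain (Letter.b :: ·)
          (shW (List.replicate k Letter.b) (List.replicate (n - k) Letter.a)) +
        Finsupp.mapDomain (Letter.a :: ·)
          (shW (List.replicate (k+1) Letter.b) (List.replicate (n - (k+1)) Letter.a)) := by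
      intro k hk
      rw [Finset.mem_range] at hk
      rw [show n + 1 - (k+1) = (n - (k+1)) + 1 from by omega,
        show n - k = (n - (k+1)) + 1 from by omega]
      simp only [List.replicate_succ]
      exact shW_cons _ _ _ _
    rw [Finset.sum_congr rfl h1, Finset.sum_add_distrib]
    have e3 : shW (List.replicate (n+1) Letter.b) (List.replicate (n + 1 - (n+1)) Letter.a) =
        Finsupp.mapDomain (Letter.b :: ·)
          (shW (List.replicate n Letter.b) (List.replicate (n - n) Letter.a)) := by
      simp [shW_nil_right, Finsupp.mapDomain_single, List.replicate_succ]
    have e4 : shW (List.replicate 0 Letter.b) (List.replicate (n + 1 - 0) Letter.a) =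
        Finsupp.mapDomain (Letter.a :: ·)
          (shW (List.replicate 0 Letter.b) (List.replicate (n - 0) Letter.a)) := by
      simp [shW_nil_left, Finsupp.mapDomain_single, List.replicate_succ]
    have hb : Finsupp.mapDomain (Letter.b :: ·) (Bsum n) =
        (∑ k ∈ Finset.range n, Finsupp.mapDomain (Letter.b :: ·)
          (shW (List.replicate k Letter.b) (List.replicate (n - k) Letter.a))) +
        Finsupp.mapDomain (Letter.b :: ·)
          (shW (List.replicate n Letter.b) (List.replicate (n - n) Letter.a)) := by
      rw [Bsum, Finsupp.mapDomain_finset_sum, Finset.sum_range_succ]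
    have ha : Finsupp.mapDomain (Letter.a :: ·) (Bsum n) =
        (∑ k ∈ Finset.range n, Finsupp.mapDomain (Letter.a :: ·)
          (shW (List.replicate (k+1) Letter.b) (List.replicate (n - (k+1)) Letter.a))) +
        Finsupp.mapDomain (Letter.a :: ·)
          (shW (List.replicate 0 Letter.b) (List.replicate (n - 0) Letter.a)) := by
      rw [Bsum, Finsupp.mapDomain_finset_sum, Finset.sum_range_succ']
    rw [e3, e4, abPow_succ, ← ih, ha, hb]
    abel

noncomputable def Jsum (n : ℕ) : H :=
  ((wordsOfLength n).map fun w => Finsupp.single w ((jW w : ℚ))).sum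

noncomputable def Tsum (n : ℕ) : H :=
  ∑ k ∈ Finset.range (n + 1),
    shW (Letter.a :: List.replicate k Letter.b) (List.replicate (n - k) Letter.a)

lemma jW_cons_a (t : Word) : jW (Letter.a :: t) = jW t + 1 := by
  simp [jW, List.takeWhile_cons, isA, Nat.add_comm]

lemma jW_cons_b (t : Word) : jW (Letter.b :: t) = 0 := by
  simp [jW, List.takeWhile_cons, isA]

lemma jW_replicate_a (m : ℕ) : jW (List.replicate m Letter.a) = m := by
  induction m with
  | zero => rfl
  | succ m ih => rw [List.replicate_succ, jW_cons_a, ih]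

lemma jW_replicate_ab (m : ℕ) : jW (List.replicate m Letter.a ++ [Letter.b]) = m := by
  induction m with
  | zero => simp [jW_cons_b]
  | succ m ih => rw [List.replicate_succ, List.cons_append, jW_cons_a, ih]

lemma map_single_split (L : List Word) (f : Word → Word) (c d : Word → ℚ) :
    (L.map fun t => Finsupp.single (f t) (c t + d t)).sum =
      (L.map fun t => Finsupp.single (f t) (c t)).sum +
      (L.map fun t => Finsupp.single (f t) (d t)).sum := by
  induction L with
  | nil => simp
  | cons h t ih =>
    simp only [List.map_cons, List.sum_cons]
    rw [ih, Finsupp.single_add]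
    abel

lemma Jsum_succ (n : ℕ) :
    Jsum (n + 1) =
      Finsupp.mapDomain (Letter.a :: ·) (abPow n) +
      Finsupp.mapDomain (Letter.a :: ·) (Jsum n) := by
  rw [Jsum, wordsOfLength]
  simp only [List.map_append, List.map_map, List.sum_append]
  have hb : ((wordsOfLength n).map
      ((fun w => Finsupp.single w ((jW w : ℚ))) ∘ (Letter.b :: ·))).sum = 0 := by
    have : ((fun w => Finsupp.single w ((jW w : ℚ))) ∘ (Letter.b :: ·)) =
        fun t => (0 : H) := by
      funext t; simp [jW_cons_b]
    rw [this]
    induction (wordsOfLength n) <;> simp [*]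
  rw [hb, add_zero]
  have ha : ((fun w => Finsupp.single w ((jW w : ℚ))) ∘ (Letter.a :: ·)) =
      fun t => Finsupp.single (Letter.a :: t) ((jW t : ℚ) + 1) := by
    funext t; simp [jW_cons_a]
  rw [ha]
  rw [map_single_split (wordsOfLength n) (Letter.a :: ·)
      (fun t => (jW t : ℚ)) (fun _ => (1:ℚ)),
    ← mapDomain_cons_sum, ← mapDomain_cons_sum]
  rw [show ((wordsOfLength n).map fun t => Finsupp.single t ((jW t : ℚ))).sum = Jsum n from rfl,
    show ((wordsOfLength n).map fun t => Finsupp.single t (1:ℚ)).sum = abPow n from rfl]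
  abel

lemma Tsum_eq (n : ℕ) : Tsum n = Jsum (n + 1) := by
  induction n with
  | zero =>
    rw [Tsum, Finset.sum_range_one]
    simp only [List.replicate_zero, shW_nil_right]
    rw [Jsum, wordsOfLength, wordsOfLength]
    simp [shW_nil_right, jW, List.takeWhile_cons, isA]
  | succ n ih =>
    rw [Tsum, Finset.sum_range_succ]
    have h1 : ∀ k ∈ Finset.range (n + 1),
        shW (Letter.a :: List.replicate k Letter.b) (List.replicate (n + 1 - k) Letter.a) =
        Finsupp.mapDomain (Letter.a :: ·)
          (shW (List.replicate k Letter.b) (List.replicate (n + 1 - k) Letter.a)) +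
        Finsupp.mapDomain (Letter.a :: ·)
          (shW (Letter.a :: List.replicate k Letter.b) (List.replicate (n - k) Letter.a)) := by
      intro k hk
      rw [Finset.mem_range] at hk
      rw [show n + 1 - k = (n - k) + 1 from by omega]
      conv_lhs => rw [List.replicate_succ]
      rw [shW_cons, ← List.replicate_succ, show (n - k) + 1 = n + 1 - k from by omega]
    rw [Finset.sum_congr rfl h1, Finset.sum_add_distrib]
    have h2 : shW (Letter.a :: List.replicate (n+1) Letter.b)
        (List.replicate (n + 1 - (n+1)) Letter.a) =
        Finsupp.mapDomain (Letter.a :: ·)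
          (shW (List.replicate (n+1) Letter.b) (List.replicate (n + 1 - (n+1)) Letter.a)) := by
      simp [shW_nil_right, Finsupp.mapDomain_single]
    rw [h2]
    have hB : Finsupp.mapDomain (Letter.a :: ·) (Bsum (n+1)) =
        (∑ k ∈ Finset.range (n+1), Finsupp.mapDomain (Letter.a :: ·)
          (shW (List.replicate k Letter.b) (List.replicate (n + 1 - k) Letter.a))) +
        Finsupp.mapDomain (Letter.a :: ·)
          (shW (List.replicate (n+1) Letter.b) (List.replicate (n + 1 - (n+1)) Letter.a)) := by
      rw [Bsum, Finsupp.mapDomain_finset_sum, Finset.sum_range_succ]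
    have hT : Finsupp.mapDomain (Letter.a :: ·) (Tsum n) =
        ∑ k ∈ Finset.range (n+1), Finsupp.mapDomain (Letter.a :: ·)
          (shW (Letter.a :: List.replicate k Letter.b) (List.replicate (n - k) Letter.a)) := by
      rw [Tsum, Finsupp.mapDomain_finset_sum]
    rw [Jsum_succ (n+1), ← Bsum_eq, ← ih, hB, hT]
    abel

lemma sumMapZero (L : List Word) (g : Word → H) (h : ∀ t ∈ L, g t = 0) :
    (L.map g).sum = 0 := by
  induction L with
  | nil => rfl
  | cons s t ih => simp_all

lemma delta_words (n : ℕ) : ∀ u : Word, u.length = n →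
    ((wordsOfLength n).map fun t => Finsupp.single t (if t = u then (1:ℚ) else 0)).sum =
      Finsupp.single u 1 := by
  induction n with
  | zero =>
    intro u hu
    rw [List.length_eq_zero_iff] at hu
    subst hu
    simp [wordsOfLength]
  | succ n ih =>
    rintro (_ | ⟨c, s⟩) hu
    · simp at hu
    · simp only [List.length_cons, Nat.add_right_cancel_iff] at hu
      rw [wordsOfLength]
      simp only [List.map_append, List.map_map, List.sum_append]
      have key : ∀ x : Letter,
          ((wordsOfLength n).map
            ((fun t => Finsupp.single t (if t = c :: s then (1:ℚ) else 0)) ∘ (x :: ·))).sum =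
          if x = c then Finsupp.single (c :: s) 1 else 0 := by
        intro x
        by_cases hx : x = c
        · subst hx
          have he : ((fun t => Finsupp.single t (if t = x :: s then (1:ℚ) else 0)) ∘ (x :: ·)) =
              fun t => Finsupp.single (x :: t) (if t = s then (1:ℚ) else 0) := by
            funext t
            simp only [Function.comp_apply, List.cons.injEq, true_and]
          rw [he, ← mapDomain_cons_sum, ih s hu, Finsupp.mapDomain_single, if_pos rfl]
        · rw [if_neg hx]
          apply sumMapZero
          intro t _
          simp only [Function.comp_apply]
          rw [if_neg (by simp [hx]), Finsupp.single_zero]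
      rw [key Letter.a, key Letter.b]
      cases c <;> simp


lemma map_single_split' (L : List Word) (c d : Word → ℚ) :
    (L.map fun t => Finsupp.single t (c t + d t)).sum =
      (L.map fun t => Finsupp.single t (c t)).sum +
      (L.map fun t => Finsupp.single t (d t)).sum := by
  induction L with
  | nil => simp
  | cons h t ih =>
    simp only [List.map_cons, List.sum_cons]
    rw [ih, Finsupp.single_add]
    abel

lemma replicate_ne (n : ℕ) :
    List.replicate (n+1) Letter.a ≠ List.replicate n Letter.a ++ [Letter.b] := by
  intro h
  have hb : Letter.b ∈ List.replicate (n+1) Letter.a := by rw [h]; simp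
  simp [List.mem_replicate] at hb

lemma ccoef_eq (n : ℕ) (w : Word) :
    ((ccoef (n+1) w : ℚ)) =
      (jW w : ℚ) +
        (if w = List.replicate n Letter.a ++ [Letter.b] then (1:ℚ) else 0) := by
  by_cases h1 : w = List.replicate (n+1) Letter.a
  · subst h1
    rw [ccoef, if_pos rfl, if_neg (by simpa using replicate_ne n), jW_replicate_a]
    push_cast; ring
  · by_cases h2 : w = List.replicate n Letter.a ++ [Letter.b]
    · subst h2
      rw [ccoef, if_neg (fun h => replicate_ne n h.symm), Nat.add_sub_cancel,
        if_pos rfl, jW_replicate_ab, if_pos rfl]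
      push_cast; ring
    · rw [ccoef, if_neg h1, Nat.add_sub_cancel, if_neg h2, if_neg h2, add_zero]

end Aux

/-- For `r ≥ 2`: `⧈(a b^{r-1}) = Σ_{w ∈ W_r} c(w) · w`, the sum being over all
words of length `r`. -/
theorem statement8 (r : ℕ) (hr : 2 ≤ r) :
    box (Letter.a :: List.replicate (r - 1) Letter.b) =
      ((wordsOfLength r).map fun w => Finsupp.single w ((ccoef r w : ℚ))).sum := by
  obtain ⟨n, rfl⟩ : ∃ n, r = n + 1 := ⟨r - 1, by omega⟩
  rw [Nat.add_sub_cancel, box]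
  have hlen : (Letter.a :: List.replicate n Letter.b).length = n + 1 := by simp
  rw [hlen, Finset.sum_range_succ']
  have h1 : ∀ i ∈ Finset.range (n+1),
      shW ((Letter.a :: List.replicate n Letter.b).take (i+1))
        (sigmaW ((Letter.a :: List.replicate n Letter.b).drop (i+1))) =
      shW (Letter.a :: List.replicate i Letter.b) (List.replicate (n - i) Letter.a) := by
    intro i hi
    rw [Finset.mem_range] at hi
    have hmin : min i n = i := by omega
    simp [sigmaW, List.take_succ_cons, List.drop_succ_cons, List.take_replicate,
      List.drop_replicate, List.map_replicate, List.reverse_replicate, sigmaL, hmin]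
  rw [Finset.sum_congr rfl h1]
  have h0 : shW ((Letter.a :: List.replicate n Letter.b).take 0)
      (sigmaW ((Letter.a :: List.replicate n Letter.b).drop 0)) =
      Finsupp.single (List.replicate n Letter.a ++ [Letter.b]) 1 := by
    rw [List.take_zero, List.drop_zero, shW_nil_left]
    simp [sigmaW, List.map_replicate, sigmaL, List.reverse_replicate]
  rw [h0,
    show (∑ i ∈ Finset.range (n+1),
        shW (Letter.a :: List.replicate i Letter.b) (List.replicate (n - i) Letter.a))
      = Tsum n from rfl, Tsum_eq]
  have he : (fun w => Finsupp.single w ((ccoef (n+1) w : ℚ))) =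
      fun w => Finsupp.single w ((jW w : ℚ) +
        (if w = List.replicate n Letter.a ++ [Letter.b] then (1:ℚ) else 0)) := by
    funext w; rw [ccoef_eq]
  rw [he, map_single_split' (wordsOfLength (n+1)) (fun w => (jW w : ℚ)) _,
    show ((wordsOfLength (n+1)).map fun t => Finsupp.single t ((jW t : ℚ))).sum
      = Jsum (n+1) from rfl,
    delta_words (n+1) (List.replicate n Letter.a ++ [Letter.b]) (by simp)]
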